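/- Let 0 < α̲ ≤ ᾱ, let a > 0, C_v > 0, b ≥ 0, j ∈ ℕ, and let v : ℂ → ℂ be entire with |v(z)| ≤ C_v (a+b|z|)^j · decay(z) for all z ∈ ℂ. Then |v''(z)| ≤ 2·e^{ᾱ}·C_v·(a + b + b|z|)^j · decay(z) for all z ∈ ℂ. -/

import Mathlib

/-- The decay weight: `exp(-α̲·Re z)` for `Re z ≥ 0` and `exp(-ᾱ·Re z)` for `Re z < 0`. -/
noncomputable def decay (ua oa : ℝ) (z : ℂ) : ℝ :=
  if 0 ≤ z.re then Real.exp (-ua * z.re) else Real.exp (-oa * z.re)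

/-- Bound for the second derivative of an entire function satisfying an
exponentially decaying polynomial bound (via Cauchy's formula on the
circle of radius 1). -/
theorem stmt_7 (ua oa a Cv b : ℝ) (j : ℕ)
    (hua : 0 < ua) (huo : ua ≤ oa) (ha : 0 < a) (hCv : 0 < Cv) (hb : 0 ≤ b)
    (v : ℂ → ℂ) (hv : Differentiable ℂ v)
    (hvb : ∀ z : ℂ,
      ‖v z‖ ≤ Cv * (a + b * ‖z‖) ^ j * decay ua oa z) :
    ∀ z : ℂ, ‖deriv (deriv v) z‖ ≤
      2 * Real.exp oa * Cv * (a + b + b * ‖z‖) ^ j * decay ua oa z := by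
  intro z
  have hdpos : ∀ w : ℂ, 0 < decay ua oa w := by
    intro w; unfold decay; split <;> positivity
  set M : ℝ := Real.exp oa * Cv * (a + b + b * ‖z‖) ^ j * decay ua oa z with hM
  -- bound on the unit circle about z
  have key : ∀ w : ℂ, ‖w - z‖ = 1 → ‖v w‖ ≤ M := by
    intro w hw
    have hre : |w.re - z.re| ≤ 1 := by
      calc |w.re - z.re| = |(w - z).re| := by simp
        _ ≤ ‖w - z‖ := Complex.abs_re_le_norm _
        _ = 1 := hw
    rw [abs_le] at hre
    have hdec : decay ua oa w ≤ Real.exp oa * decay ua oa z := by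
      unfold decay
      split_ifs with h1 h2 h2 <;>
        rw [← Real.exp_add] <;> apply Real.exp_le_exp.2 <;> nlinarith [hre.1, hre.2]
    have habs : ‖w‖ ≤ ‖z‖ + 1 := by
      calc ‖w‖ = ‖z + (w - z)‖ := by ring_nf
        _ ≤ ‖z‖ + ‖w - z‖ := norm_add_le _ _
        _ = ‖z‖ + 1 := by rw [hw]
    calc ‖v w‖ ≤ Cv * (a + b * ‖w‖) ^ j * decay ua oa w := hvb w
      _ ≤ Cv * (a + b + b * ‖z‖) ^ j * (Real.exp oa * decay ua oa z) := by
          apply mul_le_mul _ hdec (hdpos w).le (by positivity)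
          apply mul_le_mul_of_nonneg_left _ hCv.le
          apply pow_le_pow_left₀ (by positivity)
          nlinarith
      _ = M := by rw [hM]; ring
  -- power series on the unit ball
  have hdiff : DifferentiableOn ℂ v (Metric.closedBall z ((1 : NNReal) : ℝ)) :=
    hv.differentiableOn
  have hps := hdiff.hasFPowerSeriesOnBall (R := 1) one_pos
  set p := cauchyPowerSeries v z 1 with hp
  -- coefficient bound
  have hcoef : ‖p 2‖ ≤ M := by
    have hle := norm_cauchyPowerSeries_le v z 1 2
    have hint1 : IntervalIntegrable (fun θ : ℝ => ‖v (circleMap z 1 θ)‖)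
        MeasureTheory.volume 0 (2 * Real.pi) :=
      ((hv.continuous.comp (continuous_circleMap z 1)).norm).intervalIntegrable _ _
    have hint2 : IntervalIntegrable (fun _ : ℝ => M) MeasureTheory.volume 0 (2 * Real.pi) :=
      intervalIntegrable_const
    have hmono : (∫ θ : ℝ in (0)..2 * Real.pi, ‖v (circleMap z 1 θ)‖) ≤
        ∫ _ : ℝ in (0)..2 * Real.pi, M := by
      apply intervalIntegral.integral_mono_on Real.two_pi_pos.le hint1 hint2
      intro θ _
      apply key
      rw [circleMap_sub_center]
      simp [norm_circleMap_zero]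
    have hconst : (∫ _ : ℝ in (0)..2 * Real.pi, M) = 2 * Real.pi * M := by
      rw [intervalIntegral.integral_const, smul_eq_mul]; ring
    refine hle.trans ?_
    have hpi : (0:ℝ) < 2 * Real.pi := Real.two_pi_pos
    rw [hconst] at hmono
    have : (2 * Real.pi)⁻¹ * (∫ θ : ℝ in (0)..2 * Real.pi, ‖v (circleMap z 1 θ)‖) ≤
        (2 * Real.pi)⁻¹ * (2 * Real.pi * M) := by
      apply mul_le_mul_of_nonneg_left hmono (by positivity)
    simp only [abs_one, inv_one, one_pow, mul_one]
    calc (2 * Real.pi)⁻¹ * ∫ θ : ℝ in (0)..2 * Real.pi, ‖v (circleMap z 1 θ)‖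
        ≤ (2 * Real.pi)⁻¹ * (2 * Real.pi * M) := this
      _ = M := by field_simp
  -- Cauchy's formula for the second derivative
  have hfact := hps.factorial_smul (1 : ℂ) 2
  rw [NNReal.coe_one] at hfact
  have hiter : deriv (deriv v) z = iteratedDeriv 2 v z := by
    simp [iteratedDeriv_succ, iteratedDeriv_one]
  have hval : ‖iteratedDeriv 2 v z‖ ≤ 2 * M := by
    rw [iteratedDeriv_eq_iteratedFDeriv, ← hfact]
    have h1 : ‖p 2 (fun _ => (1 : ℂ))‖ ≤ ‖p 2‖ := by
      have := (p 2).le_opNorm (fun _ => (1 : ℂ))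
      simpa using this
    have h2 : (Nat.factorial 2) • (p 2 fun _ => (1 : ℂ)) = (2 : ℂ) * (p 2 fun _ => 1) := by
      rw [nsmul_eq_mul]; norm_num [Nat.factorial]
    rw [h2, norm_mul]
    simp only [Complex.norm_ofNat]
    nlinarith [norm_nonneg (p 2 fun _ => (1:ℂ))]
  calc ‖deriv (deriv v) z‖ = ‖iteratedDeriv 2 v z‖ := by
        rw [hiter]
    _ ≤ 2 * M := hval
    _ = 2 * Real.exp oa * Cv * (a + b + b * ‖z‖) ^ j * decay ua oa z := by
        rw [hM]; ring
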